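/- Fix p ∈ (0,1). For any t ≥ 0 and any Boolean function f : {-1,1}^n → {-1,1}, Var(f) - Var(P_t f) = 1 - E|P_t f|² ≤ 2 max{p, 1-p} √(π(1 - e^{-2t})) · E|∇f|. -/

import Mathlib

open Finset Real
open scoped Classical

noncomputable def wt (p : ℝ) (n : ℕ) (x : Fin n → Bool) : ℝ :=
  ∏ i, if x i then p else 1 - p

noncomputable def ex (p : ℝ) (n : ℕ) (f : (Fin n → Bool) → ℝ) : ℝ :=
  ∑ x : Fin n → Bool, wt p n x * f x

noncomputable def var (p : ℝ) (n : ℕ) (f : (Fin n → Bool) → ℝ) : ℝ :=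
  ex p n (fun x => f x ^ 2) - (ex p n f) ^ 2

def flipC {n : ℕ} (j : Fin n) (x : Fin n → Bool) : Fin n → Bool :=
  Function.update x j (!(x j))

noncomputable def Dj {n : ℕ} (j : Fin n) (f : (Fin n → Bool) → ℝ) (x : Fin n → Bool) : ℝ :=
  (f x - f (flipC j x)) / 2

noncomputable def gradNorm {n : ℕ} (f : (Fin n → Bool) → ℝ) (x : Fin n → Bool) : ℝ :=
  Real.sqrt (∑ j, (Dj j f x) ^ 2)

noncomputable def condExpJ (p : ℝ) {n : ℕ} (j : Fin n) (f : (Fin n → Bool) → ℝ)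
    (x : Fin n → Bool) : ℝ :=
  p * f (Function.update x j true) + (1 - p) * f (Function.update x j false)

noncomputable def infl (p : ℝ) (n : ℕ) (j : Fin n) (f : (Fin n → Bool) → ℝ) : ℝ :=
  ex p n (fun x => |f x - condExpJ p j f x|)

noncomputable def heatPt (p t : ℝ) (n : ℕ) (f : (Fin n → Bool) → ℝ)
    (x : Fin n → Bool) : ℝ :=
  ∑ y : Fin n → Bool,
    (∏ j, ((if y j = x j then Real.exp (-t) else 0)
      + (1 - Real.exp (-t)) * (if y j then p else 1 - p))) * f y

noncomputable def lpNorm (p : ℝ) (n : ℕ) (r : ℝ) (f : (Fin n → Bool) → ℝ) : ℝ :=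
  (ex p n (fun x => |f x| ^ r)) ^ (1 / r)

noncomputable def sens {n : ℕ} (f : (Fin n → Bool) → ℝ) (x : Fin n → Bool) : ℝ :=
  ((Finset.univ.filter (fun j : Fin n => f x ≠ f (flipC j x))).card : ℝ)

noncomputable def hEdge {n : ℕ} (f : (Fin n → Bool) → ℝ) (x : Fin n → Bool) : ℝ :=
  if f x = 1 then ((Finset.univ.filter (fun j : Fin n => f (flipC j x) ≠ 1)).card : ℝ) else 0

noncomputable def stQ (p : ℝ) (b : Bool) : ℝ := if b then p else 1 - p

noncomputable def stKer (p r : ℝ) (a b : Bool) : ℝ :=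
  (if b = a then r else 0) + (1 - r) * stQ p b

noncomputable def stK (p r : ℝ) {n : ℕ} (x y : Fin n → Bool) : ℝ :=
  ∏ i, stKer p r (x i) (y i)

noncomputable def stKX (p r : ℝ) {n : ℕ} (j : Fin n) (x y : Fin n → Bool) : ℝ :=
  ∏ i, if i = j then 1 else stKer p r (x i) (y i)

noncomputable def stChi (p : ℝ) (a b : Bool) : ℝ := (if b = a then 1 else 0) - stQ p b

noncomputable def stG {n : ℕ} (f : (Fin n → Bool) → ℝ) (j : Fin n) (x : Fin n → Bool) : ℝ :=
  Dj j f (Function.update x j true)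

section Basic
variable {n : ℕ} {p r : ℝ}

lemma stQ_pos (hp : p ∈ Set.Ioo (0:ℝ) 1) (b : Bool) : 0 < stQ p b := by
  obtain ⟨h1, h2⟩ := hp; cases b <;> simp [stQ] <;> linarith

lemma stQ_le_max (b : Bool) : stQ p b ≤ max p (1 - p) := by
  cases b
  · simpa [stQ] using le_max_right p (1 - p)
  · simpa [stQ] using le_max_left p (1 - p)

lemma min_le_stQ (b : Bool) : min p (1 - p) ≤ stQ p b := by
  cases b
  · simpa [stQ] using min_le_right p (1 - p)
  · simpa [stQ] using min_le_left p (1 - p)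

lemma stQ_add (p : ℝ) : stQ p true + stQ p false = 1 := by simp [stQ]

lemma stQ_not (p : ℝ) (b : Bool) : stQ p (!b) = 1 - stQ p b := by
  cases b <;> simp [stQ]

lemma stQ_mul_not (p : ℝ) (b : Bool) : stQ p b * stQ p (!b) = p * (1 - p) := by
  cases b <;> simp [stQ] <;> ring

lemma stKer_nonneg (hp : p ∈ Set.Ioo (0:ℝ) 1) (h0 : 0 ≤ r) (h1 : r ≤ 1) (a b : Bool) :
    0 ≤ stKer p r a b := by
  have := stQ_pos hp b; unfold stKer; split <;> nlinarith

lemma stKer_pos (hp : p ∈ Set.Ioo (0:ℝ) 1) (h0 : 0 ≤ r) (h1 : r < 1) (a b : Bool) :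
    0 < stKer p r a b := by
  have := stQ_pos hp b; unfold stKer; split <;> nlinarith

lemma stKer_rowsum (p r : ℝ) (a : Bool) : stKer p r a true + stKer p r a false = 1 := by
  cases a <;> simp [stKer, stQ] <;> ring

lemma stKer_rowsum' (p r : ℝ) (a b : Bool) : stKer p r a b + stKer p r a (!b) = 1 := by
  cases a <;> cases b <;> simp [stKer, stQ] <;> ring

lemma stKer_colsum (p r : ℝ) (b : Bool) :
    stQ p true * stKer p r true b + stQ p false * stKer p r false b = stQ p b := by
  cases b <;> simp [stKer, stQ] <;> ring

lemma stKer_comp (p r : ℝ) (b c : Bool) :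
    stQ p true * stKer p r true b * stKer p r true c
      + stQ p false * stKer p r false b * stKer p r false c
    = stQ p b * stKer p (r * r) b c := by
  cases b <;> cases c <;> simp [stKer, stQ] <;> ring

lemma stKer_one (p : ℝ) (a b : Bool) : stKer p 1 a b = if b = a then 1 else 0 := by
  unfold stKer; split <;> ring

lemma stKer_affine (p : ℝ) (a b : Bool) (r : ℝ) :
    stKer p r a b = r * stChi p a b + stQ p b := by
  unfold stKer stChi; split <;> ring

lemma st_sum_prod (F : Fin n → Bool → ℝ) :
    ∑ x : Fin n → Bool, ∏ i, F i (x i) = ∏ i, (F i true + F i false) := by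
  rw [show (∑ x : Fin n → Bool, ∏ i, F i (x i)) = ∏ i, ∑ b, F i b from (Fintype.prod_sum F).symm]
  exact Finset.prod_congr rfl fun i _ => by rw [Fintype.sum_bool]

lemma st_prod_ite_one (g : Fin n → ℝ) (j : Fin n) :
    ∏ i, (if i = j then 1 else g i) = ∏ i ∈ univ.erase j, g i := by
  calc ∏ i, (if i = j then 1 else g i)
      = ∏ i ∈ univ.erase j, (if i = j then 1 else g i) :=
        (Finset.prod_erase univ (by simp)).symm
    _ = ∏ i ∈ univ.erase j, g i :=
        Finset.prod_congr rfl fun i hi => by rw [if_neg (Finset.ne_of_mem_erase hi)]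

lemma st_prod_split (h : Fin n → Bool → ℝ) (y : Fin n → Bool) (j : Fin n) :
    ∏ i, h i (y i) = h j (y j) * ∏ i, (if i = j then 1 else h i (y i)) := by
  rw [st_prod_ite_one]
  exact (Finset.mul_prod_erase univ _ (Finset.mem_univ j)).symm

lemma st_prod_update (h : Fin n → Bool → ℝ) (y : Fin n → Bool) (j : Fin n) (b : Bool) :
    ∏ i, h i (Function.update y j b i) = h j b * ∏ i, (if i = j then 1 else h i (y i)) := by
  rw [st_prod_split h (Function.update y j b) j, Function.update_self]
  congr 1
  refine Finset.prod_congr rfl fun i _ => ?_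
  by_cases hij : i = j
  · simp [hij]
  · rw [if_neg hij, if_neg hij, Function.update_of_ne hij]

lemma st_flip_apply (j : Fin n) (x : Fin n → Bool) : flipC j x j = !(x j) :=
  Function.update_self _ _ _

lemma st_flip_apply_ne {i j : Fin n} (x : Fin n → Bool) (h : i ≠ j) : flipC j x i = x i :=
  Function.update_of_ne h _ _

lemma st_flip_flip (j : Fin n) (x : Fin n → Bool) : flipC j (flipC j x) = x := by
  funext i
  by_cases hij : i = j
  · subst hij
    show Function.update (flipC i x) i (!(flipC i x i)) i = x i
    rw [Function.update_self, st_flip_apply, Bool.not_not]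
  · show Function.update (flipC j x) j (!(flipC j x j)) i = x i
    rw [Function.update_of_ne hij, st_flip_apply_ne _ hij]

lemma st_sum_flip (j : Fin n) (F : (Fin n → Bool) → ℝ) : ∑ x, F (flipC j x) = ∑ x, F x :=
  Fintype.sum_bijective (flipC j) (Function.Involutive.bijective (st_flip_flip j)) _ _
    (fun _ => rfl)

lemma st_flip_update_true (j : Fin n) (x : Fin n → Bool) :
    flipC j (Function.update x j true) = Function.update x j false := by
  simp [flipC, Function.update_idem]

lemma st_Dj_flip (j : Fin n) (f : (Fin n → Bool) → ℝ) (x : Fin n → Bool) :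
    Dj j f (flipC j x) = - Dj j f x := by
  unfold Dj; rw [st_flip_flip]; ring

lemma st_gj_eq (f : (Fin n → Bool) → ℝ) (j : Fin n) (x : Fin n → Bool) :
    stG f j x = (f (Function.update x j true) - f (Function.update x j false)) / 2 := by
  unfold stG Dj; rw [st_flip_update_true]

lemma st_gj_flip (f : (Fin n → Bool) → ℝ) (j : Fin n) (x : Fin n → Bool) :
    stG f j (flipC j x) = stG f j x := by
  unfold stG flipC; rw [Function.update_idem]

lemma st_gj_sq (f : (Fin n → Bool) → ℝ) (j : Fin n) (x : Fin n → Bool) :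
    (stG f j x) ^ 2 = (Dj j f x) ^ 2 := by
  unfold stG
  cases h : x j
  · have e : Function.update x j true = flipC j x := by
      unfold flipC; rw [h, Bool.not_false]
    rw [e, st_Dj_flip]; ring
  · have e : Function.update x j true = x := by rw [← h]; exact Function.update_eq_self j x
    rw [e]

lemma st_wt_eq (p : ℝ) (n : ℕ) (x : Fin n → Bool) : wt p n x = ∏ i, stQ p (x i) := rfl

lemma st_wt_nonneg (hp : p ∈ Set.Ioo (0:ℝ) 1) (x : Fin n → Bool) : 0 ≤ wt p n x := by
  rw [st_wt_eq]; exact Finset.prod_nonneg fun i _ => (stQ_pos hp _).le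

lemma st_sum_wt (p : ℝ) (n : ℕ) : ∑ x : Fin n → Bool, wt p n x = 1 := by
  simp_rw [st_wt_eq]
  rw [st_sum_prod]
  simp [stQ_add]

lemma st_wt_split (p : ℝ) (x : Fin n → Bool) (j : Fin n) :
    wt p n x = stQ p (x j) * ∏ i, (if i = j then 1 else stQ p (x i)) := by
  rw [st_wt_eq]; exact st_prod_split _ x j

lemma st_wt_flip (p : ℝ) (x : Fin n → Bool) (j : Fin n) :
    wt p n (flipC j x) = stQ p (!(x j)) * ∏ i, (if i = j then 1 else stQ p (x i)) := by
  rw [st_wt_eq]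
  exact st_prod_update _ x j _

lemma st_K_nonneg (hp : p ∈ Set.Ioo (0:ℝ) 1) (h0 : 0 ≤ r) (h1 : r ≤ 1) (x y : Fin n → Bool) :
    0 ≤ stK p r x y :=
  Finset.prod_nonneg fun i _ => stKer_nonneg hp h0 h1 _ _

lemma st_K_rowsum (x : Fin n → Bool) : ∑ y, stK p r x y = 1 := by
  unfold stK
  rw [st_sum_prod]
  simp [stKer_rowsum]

lemma st_K_split (j : Fin n) (x y : Fin n → Bool) :
    stK p r x y = stKer p r (x j) (y j) * stKX p r j x y :=
  st_prod_split (fun i b => stKer p r (x i) b) y j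

lemma st_KX_flip_y (j : Fin n) (x y : Fin n → Bool) :
    stKX p r j x (flipC j y) = stKX p r j x y :=
  Finset.prod_congr rfl fun i _ => by
    by_cases hij : i = j
    · simp [hij]
    · rw [if_neg hij, if_neg hij, st_flip_apply_ne _ hij]

lemma st_KX_flip_x (j : Fin n) (x y : Fin n → Bool) :
    stKX p r j (flipC j x) y = stKX p r j x y :=
  Finset.prod_congr rfl fun i _ => by
    by_cases hij : i = j
    · simp [hij]
    · rw [if_neg hij, if_neg hij, st_flip_apply_ne _ hij]

lemma st_K_flip_y (j : Fin n) (x y : Fin n → Bool) :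
    stK p r x (flipC j y) = stKer p r (x j) (!(y j)) * stKX p r j x y := by
  rw [st_K_split j x (flipC j y), st_flip_apply, st_KX_flip_y]

end Basic


noncomputable def stPsi (p : ℝ) (n : ℕ) (f : (Fin n → Bool) → ℝ) (r : ℝ) : ℝ :=
  ∑ x : Fin n → Bool, ∑ y : Fin n → Bool, (wt p n x * (f x * f y)) * stK p r x y

section Op
variable {n : ℕ} {p r t : ℝ} {f : (Fin n → Bool) → ℝ}

lemma st_heat_eq (p t : ℝ) (n : ℕ) (f : (Fin n → Bool) → ℝ) (x : Fin n → Bool) :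
    heatPt p t n f x = ∑ y, stK p (Real.exp (-t)) x y * f y := rfl

lemma st_colsum_K (p r : ℝ) (n : ℕ) (y : Fin n → Bool) :
    ∑ x, wt p n x * stK p r x y = wt p n y := by
  have h1 : ∀ x : Fin n → Bool, wt p n x * stK p r x y
      = ∏ i, (stQ p (x i) * stKer p r (x i) (y i)) := by
    intro x
    rw [st_wt_eq, stK, ← Finset.prod_mul_distrib]
  simp_rw [h1]
  rw [st_sum_prod (fun i b => stQ p b * stKer p r b (y i)), st_wt_eq]
  exact Finset.prod_congr rfl fun i _ => stKer_colsum p r (y i)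

lemma st_ex_heat (p t : ℝ) (n : ℕ) (f : (Fin n → Bool) → ℝ) :
    ex p n (heatPt p t n f) = ex p n f := by
  unfold ex
  simp_rw [st_heat_eq, Finset.mul_sum]
  rw [Finset.sum_comm]
  refine Finset.sum_congr rfl fun y _ => ?_
  have : ∀ x : Fin n → Bool, wt p n x * (stK p (Real.exp (-t)) x y * f y)
      = (wt p n x * stK p (Real.exp (-t)) x y) * f y := fun x => by ring
  simp_rw [this, ← Finset.sum_mul, st_colsum_K]


lemma st_comp_K (p r : ℝ) (n : ℕ) (y z : Fin n → Bool) :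
    ∑ x, wt p n x * (stK p r x y * stK p r x z) = wt p n y * stK p (r * r) y z := by
  have h1 : ∀ x : Fin n → Bool, wt p n x * (stK p r x y * stK p r x z)
      = ∏ i, (stQ p (x i) * stKer p r (x i) (y i) * stKer p r (x i) (z i)) := by
    intro x
    rw [st_wt_eq]; unfold stK
    rw [← Finset.prod_mul_distrib, ← Finset.prod_mul_distrib]
    exact Finset.prod_congr rfl fun i _ => by ring
  simp_rw [h1]
  rw [st_sum_prod (fun i b => stQ p b * stKer p r b (y i) * stKer p r b (z i))]
  have h2 : ∀ i : Fin n, stQ p true * stKer p r true (y i) * stKer p r true (z i)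
      + stQ p false * stKer p r false (y i) * stKer p r false (z i)
      = stQ p (y i) * stKer p (r * r) (y i) (z i) := fun i => stKer_comp p r (y i) (z i)
  rw [Finset.prod_congr rfl fun i _ => h2 i, Finset.prod_mul_distrib, ← st_wt_eq]
  rfl

lemma st_ex_heat_sq (p t : ℝ) (n : ℕ) (f : (Fin n → Bool) → ℝ) :
    ex p n (fun x => (heatPt p t n f x) ^ 2)
      = stPsi p n f (Real.exp (-t) * Real.exp (-t)) := by
  unfold ex stPsi
  set r := Real.exp (-t) with hr
  have h1 : ∀ x : Fin n → Bool, wt p n x * (heatPt p t n f x) ^ 2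
      = ∑ y, ∑ z, (f y * f z) * (wt p n x * (stK p r x y * stK p r x z)) := by
    intro x
    rw [st_heat_eq, sq, Finset.sum_mul_sum]
    rw [Finset.mul_sum]
    refine Finset.sum_congr rfl fun y _ => ?_
    rw [Finset.mul_sum]
    exact Finset.sum_congr rfl fun z _ => by ring
  simp_rw [h1]
  rw [Finset.sum_comm]
  refine Finset.sum_congr rfl fun y _ => ?_
  rw [Finset.sum_comm]
  refine Finset.sum_congr rfl fun z _ => ?_
  rw [← Finset.mul_sum, st_comp_K]
  ring

lemma st_K_one (x y : Fin n → Bool) : stK p 1 x y = if y = x then 1 else 0 := by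
  unfold stK; simp_rw [stKer_one]
  by_cases h : y = x
  · subst h; simp
  · rw [if_neg h]
    obtain ⟨i, hi⟩ : ∃ i, y i ≠ x i := by
      by_contra hc; push_neg at hc; exact h (funext hc)
    exact Finset.prod_eq_zero (Finset.mem_univ i) (by rw [if_neg hi])

lemma stPsi_one (hf : ∀ x, f x = 1 ∨ f x = -1) : stPsi p n f 1 = 1 := by
  unfold stPsi
  have h1 : ∀ x : Fin n → Bool, ∑ y, (wt p n x * (f x * f y)) * stK p 1 x y = wt p n x := by
    intro x
    rw [Finset.sum_eq_single x]
    · rcases hf x with h | h <;> simp [st_K_one, h]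
    · intro y _ hyx; rw [st_K_one, if_neg hyx, mul_zero]
    · intro h; exact absurd (Finset.mem_univ x) h
  simp_rw [h1]; exact st_sum_wt p n

lemma st_heat_zero (p : ℝ) (n : ℕ) (f : (Fin n → Bool) → ℝ) : heatPt p 0 n f = f := by
  funext x
  rw [st_heat_eq]
  simp_rw [neg_zero, Real.exp_zero, st_K_one]
  rw [Finset.sum_eq_single x]
  · rw [if_pos rfl, one_mul]
  · intro y _ hyx; rw [if_neg hyx, zero_mul]
  · intro h; exact absurd (Finset.mem_univ x) h

lemma st_ex_sq (hf : ∀ x, f x = 1 ∨ f x = -1) : ex p n (fun x => f x ^ 2) = 1 := by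
  unfold ex
  have h1 : ∀ x : Fin n → Bool, f x ^ 2 = 1 := fun x => by
    rcases hf x with h | h <;> rw [h] <;> norm_num
  simp_rw [h1, mul_one]
  exact st_sum_wt p n

end Op

noncomputable def stA (p r : ℝ) (n : ℕ) (f : (Fin n → Bool) → ℝ) (j : Fin n) : ℝ :=
  ∑ x : Fin n → Bool, ∑ y : Fin n → Bool,
    (wt p n x * (f x * f y)) * (stKX p r j x y * stChi p (x j) (y j))

noncomputable def stB (p r : ℝ) (n : ℕ) (f : (Fin n → Bool) → ℝ) (j : Fin n) : ℝ :=
  ∑ x : Fin n → Bool, ∑ y : Fin n → Bool,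
    (p * (1 - p)) * ((∏ i, if i = j then 1 else stQ p (x i))
      * (stKX p r j x y * (stG f j x * stG f j y)))

noncomputable def stU (p r : ℝ) {n : ℕ} (f : (Fin n → Bool) → ℝ) (j : Fin n)
    (x : Fin n → Bool) : ℝ :=
  ∑ y, stK p r x y * stG f j y

section Deriv
variable {n : ℕ} {p r t : ℝ} {f : (Fin n → Bool) → ℝ}

lemma st_hasDerivAt_ker (p : ℝ) (a b : Bool) (r : ℝ) :
    HasDerivAt (fun r => stKer p r a b) (stChi p a b) r := by
  have h : (fun r => stKer p r a b) = fun r => r * stChi p a b + stQ p b :=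
    funext fun r => stKer_affine p a b r
  rw [h]
  simpa using (hasDerivAt_mul_const (stChi p a b)).add_const (stQ p b)

lemma st_hasDerivAt_K (p : ℝ) {n : ℕ} (x y : Fin n → Bool) (r : ℝ) :
    HasDerivAt (fun r => stK p r x y)
      (∑ j, stKX p r j x y * stChi p (x j) (y j)) r := by
  have h := HasDerivAt.fun_finsetProd (u := univ) (f := fun i r => stKer p r (x i) (y i))
    (f' := fun i => stChi p (x i) (y i)) (x := r)
    (fun i _ => st_hasDerivAt_ker p (x i) (y i) r)
  have h2 : ∀ j : Fin n,
      (∏ i ∈ univ.erase j, stKer p r (x i) (y i)) • stChi p (x j) (y j)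
      = stKX p r j x y * stChi p (x j) (y j) := by
    intro j
    rw [smul_eq_mul, ← st_prod_ite_one (fun i => stKer p r (x i) (y i)) j]
    rfl
  rw [Finset.sum_congr rfl (fun j _ => h2 j)] at h
  exact h

lemma st_hasDerivAt_Psi (p : ℝ) (n : ℕ) (f : (Fin n → Bool) → ℝ) (r : ℝ) :
    HasDerivAt (stPsi p n f) (∑ j, stA p r n f j) r := by
  have h : HasDerivAt (fun r => ∑ x : Fin n → Bool, ∑ y : Fin n → Bool,
      (wt p n x * (f x * f y)) * stK p r x y)
      (∑ x : Fin n → Bool, ∑ y : Fin n → Bool, (wt p n x * (f x * f y)) *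
        (∑ j, stKX p r j x y * stChi p (x j) (y j))) r := by
    apply HasDerivAt.fun_sum; intro x _
    apply HasDerivAt.fun_sum; intro y _
    exact (st_hasDerivAt_K p x y r).const_mul _
  have e : ∑ j, stA p r n f j = ∑ x : Fin n → Bool, ∑ y : Fin n → Bool,
      (wt p n x * (f x * f y)) * (∑ j, stKX p r j x y * stChi p (x j) (y j)) := by
    unfold stA
    rw [Finset.sum_comm]
    refine Finset.sum_congr rfl fun x _ => ?_
    rw [Finset.sum_comm]
    refine Finset.sum_congr rfl fun y _ => ?_
    rw [Finset.mul_sum]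
  rw [← e] at h
  exact h

lemma st_P4 (p r : ℝ) (n : ℕ) (f : (Fin n → Bool) → ℝ) (j : Fin n) (x y : Fin n → Bool) :
    (wt p n x * (f x * f y)) * (stKX p r j x y * stChi p (x j) (y j))
    + (wt p n x * (f x * f (flipC j y)))
        * (stKX p r j x (flipC j y) * stChi p (x j) ((flipC j y) j))
    + (wt p n (flipC j x) * (f (flipC j x) * f y))
        * (stKX p r j (flipC j x) y * stChi p ((flipC j x) j) (y j))
    + (wt p n (flipC j x) * (f (flipC j x) * f (flipC j y)))
        * (stKX p r j (flipC j x) (flipC j y) * stChi p ((flipC j x) j) ((flipC j y) j))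
    = 4 * ((p * (1 - p)) * ((∏ i, if i = j then 1 else stQ p (x i))
        * (stKX p r j x y * (stG f j x * stG f j y)))) := by
  have hKy := st_KX_flip_y (p := p) (r := r) j x y
  have hKx := st_KX_flip_x (p := p) (r := r) j x y
  have hKxy : stKX p r j (flipC j x) (flipC j y) = stKX p r j x y := by
    rw [st_KX_flip_x, st_KX_flip_y]
  have hgx := st_gj_eq f j x
  have hgy := st_gj_eq f j y
  cases hx : x j <;> cases hy : y j
  · have hfx : f x = f (Function.update x j false) := by
      rw [show Function.update x j false = x from by rw [← hx]; exact Function.update_eq_self j x]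
    have hffx : f (flipC j x) = f (Function.update x j true) := by
      rw [show flipC j x = Function.update x j true from by
        unfold flipC; rw [hx, Bool.not_false]]
    have hfy : f y = f (Function.update y j false) := by
      rw [show Function.update y j false = y from by rw [← hy]; exact Function.update_eq_self j y]
    have hffy : f (flipC j y) = f (Function.update y j true) := by
      rw [show flipC j y = Function.update y j true from by
        unfold flipC; rw [hy, Bool.not_false]]
    rw [st_wt_split p x j, st_wt_flip p x j, hKy, hKx, hKxy, hgx, hgy, hfx, hffx, hfy, hffy]
    simp only [st_flip_apply, hx, hy, stChi, stQ, Bool.not_false, Bool.not_true]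
    norm_num
    ring
  · have hfx : f x = f (Function.update x j false) := by
      rw [show Function.update x j false = x from by rw [← hx]; exact Function.update_eq_self j x]
    have hffx : f (flipC j x) = f (Function.update x j true) := by
      rw [show flipC j x = Function.update x j true from by
        unfold flipC; rw [hx, Bool.not_false]]
    have hfy : f y = f (Function.update y j true) := by
      rw [show Function.update y j true = y from by rw [← hy]; exact Function.update_eq_self j y]
    have hffy : f (flipC j y) = f (Function.update y j false) := by
      rw [show flipC j y = Function.update y j false from by
        unfold flipC; rw [hy, Bool.not_true]]
    rw [st_wt_split p x j, st_wt_flip p x j, hKy, hKx, hKxy, hgx, hgy, hfx, hffx, hfy, hffy]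
    simp only [st_flip_apply, hx, hy, stChi, stQ, Bool.not_false, Bool.not_true]
    norm_num
    ring
  · have hfx : f x = f (Function.update x j true) := by
      rw [show Function.update x j true = x from by rw [← hx]; exact Function.update_eq_self j x]
    have hffx : f (flipC j x) = f (Function.update x j false) := by
      rw [show flipC j x = Function.update x j false from by
        unfold flipC; rw [hx, Bool.not_true]]
    have hfy : f y = f (Function.update y j false) := by
      rw [show Function.update y j false = y from by rw [← hy]; exact Function.update_eq_self j y]
    have hffy : f (flipC j y) = f (Function.update y j true) := by
      rw [show flipC j y = Function.update y j true from by
        unfold flipC; rw [hy, Bool.not_false]]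
    rw [st_wt_split p x j, st_wt_flip p x j, hKy, hKx, hKxy, hgx, hgy, hfx, hffx, hfy, hffy]
    simp only [st_flip_apply, hx, hy, stChi, stQ, Bool.not_false, Bool.not_true]
    norm_num
    ring
  · have hfx : f x = f (Function.update x j true) := by
      rw [show Function.update x j true = x from by rw [← hx]; exact Function.update_eq_self j x]
    have hffx : f (flipC j x) = f (Function.update x j false) := by
      rw [show flipC j x = Function.update x j false from by
        unfold flipC; rw [hx, Bool.not_true]]
    have hfy : f y = f (Function.update y j true) := by
      rw [show Function.update y j true = y from by rw [← hy]; exact Function.update_eq_self j y]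
    have hffy : f (flipC j y) = f (Function.update y j false) := by
      rw [show flipC j y = Function.update y j false from by
        unfold flipC; rw [hy, Bool.not_true]]
    rw [st_wt_split p x j, st_wt_flip p x j, hKy, hKx, hKxy, hgx, hgy, hfx, hffx, hfy, hffy]
    simp only [st_flip_apply, hx, hy, stChi, stQ, Bool.not_false, Bool.not_true]
    norm_num
    ring

lemma st_A_eq_B (p r : ℝ) (n : ℕ) (f : (Fin n → Bool) → ℝ) (j : Fin n) :
    stA p r n f j = stB p r n f j := by
  set F : (Fin n → Bool) → (Fin n → Bool) → ℝ := fun x y =>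
    (wt p n x * (f x * f y)) * (stKX p r j x y * stChi p (x j) (y j)) with hF
  have hA : stA p r n f j = ∑ x : Fin n → Bool, ∑ y : Fin n → Bool, F x y := rfl
  have h1 : ∑ x : Fin n → Bool, ∑ y : Fin n → Bool, F x (flipC j y)
      = ∑ x : Fin n → Bool, ∑ y : Fin n → Bool, F x y :=
    Finset.sum_congr rfl fun x _ => st_sum_flip j (fun y => F x y)
  have h2 : ∑ x : Fin n → Bool, ∑ y : Fin n → Bool, F (flipC j x) y
      = ∑ x : Fin n → Bool, ∑ y : Fin n → Bool, F x y :=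
    st_sum_flip j (fun x => ∑ y, F x y)
  have h3 : ∑ x : Fin n → Bool, ∑ y : Fin n → Bool, F (flipC j x) (flipC j y)
      = ∑ x : Fin n → Bool, ∑ y : Fin n → Bool, F x y := by
    rw [st_sum_flip j (fun x => ∑ y, F x (flipC j y))]
    exact h1
  have h4 : (4:ℝ) * stA p r n f j
      = ∑ x : Fin n → Bool, ∑ y : Fin n → Bool,
          (F x y + F x (flipC j y) + F (flipC j x) y + F (flipC j x) (flipC j y)) := by
    simp_rw [Finset.sum_add_distrib]
    rw [h1, h2, h3, hA]
    ring
  have h5 : (4:ℝ) * stA p r n f j = 4 * stB p r n f j := by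
    rw [h4]
    unfold stB
    rw [Finset.mul_sum]
    refine Finset.sum_congr rfl fun x _ => ?_
    rw [Finset.mul_sum]
    refine Finset.sum_congr rfl fun y _ => ?_
    exact st_P4 p r n f j x y
  linarith

lemma st_B_collapse (p r : ℝ) (n : ℕ) (f : (Fin n → Bool) → ℝ) (j : Fin n) :
    stB p r n f j
      = 2 * (p * (1 - p)) * ∑ x, wt p n x
          * (stG f j x * ∑ y, stKX p r j x y * stG f j y) := by
  unfold stB
  have h1 : ∀ x : Fin n → Bool,
      ∑ y, (p * (1 - p)) * ((∏ i, if i = j then 1 else stQ p (x i))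
        * (stKX p r j x y * (stG f j x * stG f j y)))
      = (p * (1 - p)) * ((∏ i, if i = j then 1 else stQ p (x i))
          * (stG f j x * ∑ y, stKX p r j x y * stG f j y)) := by
    intro x
    simp only [Finset.mul_sum]
    exact Finset.sum_congr rfl fun y _ => by ring
  simp_rw [h1]
  set H : (Fin n → Bool) → ℝ := fun x =>
    stG f j x * ∑ y, stKX p r j x y * stG f j y with hH
  have hHflip : ∀ x, H (flipC j x) = H x := by
    intro x
    simp only [hH]
    rw [st_gj_flip]
    congr 1
    refine Finset.sum_congr rfl fun y _ => ?_
    rw [st_KX_flip_x]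
  have key : ∑ x : Fin n → Bool, (∏ i, if i = j then 1 else stQ p (x i)) * H x
      = 2 * ∑ x : Fin n → Bool, wt p n x * H x := by
    have hre : ∑ x : Fin n → Bool, wt p n x * H x
        = ∑ x : Fin n → Bool, wt p n (flipC j x) * H x := by
      rw [← st_sum_flip j (fun x => wt p n x * H x)]
      exact Finset.sum_congr rfl fun x _ => by rw [hHflip]
    have : 2 * ∑ x : Fin n → Bool, wt p n x * H x
        = ∑ x : Fin n → Bool, (wt p n x + wt p n (flipC j x)) * H x := by
      rw [two_mul]
      nth_rewrite 2 [hre]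
      rw [← Finset.sum_add_distrib]
      exact Finset.sum_congr rfl fun x _ => by ring
    rw [this]
    refine (Finset.sum_congr rfl fun x _ => ?_).symm
    rw [st_wt_split p x j, st_wt_flip p x j]
    have hq : stQ p (x j) + stQ p (!(x j)) = 1 := by
      cases h : x j <;> simp [stQ]
    linear_combination ((∏ i, if i = j then 1 else stQ p (x i)) * H x) * hq
  calc ∑ x : Fin n → Bool, (p * (1 - p)) * ((∏ i, if i = j then 1 else stQ p (x i)) * H x)
      = (p * (1 - p)) * ∑ x : Fin n → Bool, (∏ i, if i = j then 1 else stQ p (x i)) * H x := by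
        rw [Finset.mul_sum]
    _ = (p * (1 - p)) * (2 * ∑ x : Fin n → Bool, wt p n x * H x) := by rw [key]
    _ = 2 * (p * (1 - p)) * ∑ x, wt p n x * H x := by ring

lemma st_T_eq_2U (p r : ℝ) (n : ℕ) (f : (Fin n → Bool) → ℝ) (j : Fin n) (x : Fin n → Bool) :
    ∑ y, stKX p r j x y * stG f j y = 2 * stU p r f j x := by
  unfold stU
  have h1 : ∑ y : Fin n → Bool, stK p r x y * stG f j y
      = ∑ y : Fin n → Bool, stK p r x (flipC j y) * stG f j y := by
    rw [← st_sum_flip j (fun y => stK p r x y * stG f j y)]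
    exact Finset.sum_congr rfl fun y _ => by rw [st_gj_flip]
  have h2 : 2 * ∑ y : Fin n → Bool, stK p r x y * stG f j y
      = ∑ y : Fin n → Bool, (stK p r x y + stK p r x (flipC j y)) * stG f j y := by
    rw [two_mul]
    nth_rewrite 2 [h1]
    rw [← Finset.sum_add_distrib]
    exact Finset.sum_congr rfl fun y _ => by ring
  rw [h2]
  refine Finset.sum_congr rfl fun y _ => ?_
  rw [st_K_split j x y, st_K_flip_y j x y]
  have hk : stKer p r (x j) (y j) + stKer p r (x j) (!(y j)) = 1 := stKer_rowsum' p r _ _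
  linear_combination (-(stKX p r j x y * stG f j y)) * hk

lemma st_B_eq_U (p r : ℝ) (n : ℕ) (f : (Fin n → Bool) → ℝ) (j : Fin n) :
    stB p r n f j
      = 4 * (p * (1 - p)) * ∑ x, wt p n x * (stG f j x * stU p r f j x) := by
  rw [st_B_collapse]
  have : ∀ x : Fin n → Bool, wt p n x * (stG f j x * ∑ y, stKX p r j x y * stG f j y)
      = 2 * (wt p n x * (stG f j x * stU p r f j x)) := by
    intro x
    rw [st_T_eq_2U]
    ring
  simp_rw [this]
  rw [← Finset.mul_sum]
  ring

end Deriv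
noncomputable def stTau (p r : ℝ) {n : ℕ} (x : Fin n → Bool) (j : Fin n) (b : Bool) : ℝ :=
  (if b then 1 else -1) / stKer p r (x j) b

section Key
variable {n : ℕ} {p r : ℝ} {f : (Fin n → Bool) → ℝ}

lemma st_E1 (p r : ℝ) (x : Fin n → Bool) (j : Fin n) (h : Bool → ℝ) :
    ∑ y, stK p r x y * h (y j)
    = stKer p r (x j) true * h true + stKer p r (x j) false * h false := by
  have hpt : ∀ y : Fin n → Bool, stK p r x y * h (y j)
      = ∏ i, (stKer p r (x i) (y i) * (if i = j then h (y i) else 1)) := by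
    intro y
    rw [Finset.prod_mul_distrib, Finset.prod_ite_eq' univ j (fun i => h (y i)),
      if_pos (Finset.mem_univ j)]
    rfl
  simp_rw [hpt]
  rw [st_sum_prod (fun i b => stKer p r (x i) b * (if i = j then h b else 1))]
  have h2 : ∀ i : Fin n, stKer p r (x i) true * (if i = j then h true else 1)
        + stKer p r (x i) false * (if i = j then h false else 1)
      = if i = j then (stKer p r (x j) true * h true + stKer p r (x j) false * h false)
        else 1 := by
    intro i
    by_cases hij : i = j
    · subst hij; simp
    · simp [hij, stKer_rowsum]
  rw [Finset.prod_congr rfl fun i _ => h2 i,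
    Finset.prod_ite_eq' univ j
      (fun _ => stKer p r (x j) true * h true + stKer p r (x j) false * h false),
    if_pos (Finset.mem_univ j)]

lemma st_E2 (p r : ℝ) (x : Fin n → Bool) {j k : Fin n} (hjk : j ≠ k) (h g : Bool → ℝ) :
    ∑ y, stK p r x y * (h (y j) * g (y k))
    = (stKer p r (x j) true * h true + stKer p r (x j) false * h false)
      * (stKer p r (x k) true * g true + stKer p r (x k) false * g false) := by
  have hpt : ∀ y : Fin n → Bool, stK p r x y * (h (y j) * g (y k))
      = ∏ i, (stKer p r (x i) (y i)
          * ((if i = j then h (y i) else 1) * (if i = k then g (y i) else 1))) := by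
    intro y
    rw [Finset.prod_mul_distrib, Finset.prod_mul_distrib,
      Finset.prod_ite_eq' univ j (fun i => h (y i)),
      Finset.prod_ite_eq' univ k (fun i => g (y i)),
      if_pos (Finset.mem_univ j), if_pos (Finset.mem_univ k)]
    rfl
  simp_rw [hpt]
  rw [st_sum_prod (fun i b => stKer p r (x i) b
    * ((if i = j then h b else 1) * (if i = k then g b else 1)))]
  have h2 : ∀ i : Fin n,
      stKer p r (x i) true * ((if i = j then h true else 1) * (if i = k then g true else 1))
      + stKer p r (x i) false * ((if i = j then h false else 1) * (if i = k then g false else 1))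
      = (if i = j then (stKer p r (x j) true * h true + stKer p r (x j) false * h false) else 1)
        * (if i = k then (stKer p r (x k) true * g true + stKer p r (x k) false * g false)
            else 1) := by
    intro i
    by_cases hij : i = j
    · subst hij
      simp only [eq_self_iff_true, if_true, if_neg hjk, mul_one, one_mul]
    · by_cases hik : i = k
      · subst hik
        simp only [eq_self_iff_true, if_true, if_neg hij, mul_one, one_mul]
      · simp only [if_neg hij, if_neg hik, mul_one, one_mul]
        simpa using stKer_rowsum p r (x i)
  rw [Finset.prod_congr rfl fun i _ => h2 i, Finset.prod_mul_distrib,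
    Finset.prod_ite_eq' univ j
      (fun _ => stKer p r (x j) true * h true + stKer p r (x j) false * h false),
    Finset.prod_ite_eq' univ k
      (fun _ => stKer p r (x k) true * g true + stKer p r (x k) false * g false),
    if_pos (Finset.mem_univ j), if_pos (Finset.mem_univ k)]

lemma st_gj_true {j : Fin n} {y : Fin n → Bool} (h : y j = true) :
    stG f j y = Dj j f y := by
  unfold stG
  rw [show Function.update y j true = y from by rw [← h]; exact Function.update_eq_self j y]

lemma st_gj_false {j : Fin n} {y : Fin n → Bool} (h : y j = false) :
    stG f j y = - Dj j f y := by
  unfold stG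
  rw [show Function.update y j true = flipC j y from by
    unfold flipC; rw [h, Bool.not_false]]
  exact st_Dj_flip j f y

lemma st_tau_pair (hp : p ∈ Set.Ioo (0:ℝ) 1) (h0 : 0 ≤ r) (h1 : r < 1)
    (x : Fin n → Bool) (j : Fin n) :
    ∑ z, stK p r x z * (f z * stTau p r x j (z j)) = 2 * stU p r f j x := by
  have hXpair : ∑ z : Fin n → Bool, stK p r x z * (f z * stTau p r x j (z j))
      = ∑ z : Fin n → Bool, stK p r x (flipC j z) * (f (flipC j z) * stTau p r x j (!(z j))) := by
    rw [← st_sum_flip j (fun z => stK p r x z * (f z * stTau p r x j (z j)))]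
    refine Finset.sum_congr rfl fun z _ => ?_
    rw [st_flip_apply]
  have h2 : 2 * ∑ z : Fin n → Bool, stK p r x z * (f z * stTau p r x j (z j))
      = ∑ z : Fin n → Bool, (stK p r x z * (f z * stTau p r x j (z j))
          + stK p r x (flipC j z) * (f (flipC j z) * stTau p r x j (!(z j)))) := by
    rw [two_mul]
    nth_rewrite 2 [hXpair]
    rw [← Finset.sum_add_distrib]
  have h3 : ∀ z : Fin n → Bool,
      stK p r x z * (f z * stTau p r x j (z j))
        + stK p r x (flipC j z) * (f (flipC j z) * stTau p r x j (!(z j)))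
      = 2 * (stKX p r j x z * stG f j z) := by
    intro z
    have hT := stKer_pos hp h0 h1 (x j) true
    have hF := stKer_pos hp h0 h1 (x j) false
    rw [st_K_split j x z, st_K_flip_y j x z]
    cases hz : z j
    · rw [st_gj_false hz]
      unfold stTau Dj
      simp only [Bool.not_false, Bool.not_true]
      norm_num
      field_simp
      ring
    · rw [st_gj_true hz]
      unfold stTau Dj
      simp only [Bool.not_false, Bool.not_true]
      norm_num
      field_simp
      ring
  have h4 : ∑ z : Fin n → Bool, 2 * (stKX p r j x z * stG f j z)
      = 2 * ∑ z, stKX p r j x z * stG f j z := by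
    rw [Finset.mul_sum]
  have := h2.trans ((Finset.sum_congr rfl fun z _ => h3 z).trans h4)
  have hT2U := st_T_eq_2U p r n f j x
  linarith [this, hT2U]

lemma st_key (hp : p ∈ Set.Ioo (0:ℝ) 1) (hf : ∀ x, f x = 1 ∨ f x = -1)
    (h0 : 0 ≤ r) (h1 : r < 1) (x : Fin n → Bool) :
    ∑ j, (stU p r f j x) ^ 2
      ≤ 1 / (4 * ((1 - r) * min p (1 - p) * (1 - (1 - r) * min p (1 - p)))) := by
  set a := min p (1 - p) with ha
  set c := (1 - r) * a * (1 - (1 - r) * a) with hc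
  have hap : 0 < a := lt_min hp.1 (by linarith [hp.2])
  have ha2 : a ≤ 1 / 2 := by
    rcases le_total p (1 - p) with h | h
    · rw [ha, min_eq_left h]; linarith
    · rw [ha, min_eq_right h]; linarith
  have hcpos : 0 < c := by
    rw [hc]
    have h1r : 0 < 1 - r := by linarith
    have hle : (1 - r) * a ≤ 1 / 2 := by nlinarith
    exact mul_pos (mul_pos h1r hap) (by linarith)
  set U : Fin n → ℝ := fun j => stU p r f j x with hU
  set τ : Fin n → Bool → ℝ := fun j b => stTau p r x j b with hτ
  set S := ∑ j, (U j) ^ 2 with hS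
  have hSnn : 0 ≤ S := Finset.sum_nonneg fun j _ => sq_nonneg _
  set W : (Fin n → Bool) → ℝ := fun y => ∑ j, U j * τ j (y j) with hW
  -- S = (1/2) ∑_y K (f W)
  have hmain : 2 * S = ∑ y, stK p r x y * (f y * W y) := by
    have e1 : ∀ y : Fin n → Bool, stK p r x y * (f y * W y)
        = ∑ j, U j * (stK p r x y * (f y * τ j (y j))) := by
      intro y
      rw [hW]
      simp only [Finset.mul_sum]
      exact Finset.sum_congr rfl fun j _ => by ring
    simp_rw [e1]
    rw [Finset.sum_comm]
    have e2 : ∀ j : Fin n, ∑ y : Fin n → Bool, U j * (stK p r x y * (f y * τ j (y j)))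
        = 2 * (U j) ^ 2 := by
      intro j
      rw [← Finset.mul_sum, hτ]
      simp only
      rw [st_tau_pair hp h0 h1 x j]
      rw [hU]
      ring
    rw [Finset.sum_congr rfl fun j _ => e2 j, ← Finset.mul_sum]
  -- Cauchy-Schwarz
  have hKnn : ∀ y, 0 ≤ stK p r x y := fun y => st_K_nonneg hp h0 h1.le x y
  have hcs : (∑ y, stK p r x y * (f y * W y)) ^ 2
      ≤ (∑ y, stK p r x y * (f y) ^ 2) * (∑ y, stK p r x y * (W y) ^ 2) := by
    have := Finset.sum_mul_sq_le_sq_mul_sq univ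
      (fun y => Real.sqrt (stK p r x y) * f y)
      (fun y => Real.sqrt (stK p r x y) * W y)
    have e1 : ∀ y : Fin n → Bool,
        (Real.sqrt (stK p r x y) * f y) * (Real.sqrt (stK p r x y) * W y)
        = stK p r x y * (f y * W y) := by
      intro y
      rw [mul_mul_mul_comm, Real.mul_self_sqrt (hKnn y)]
    have e2 : ∀ y : Fin n → Bool, (Real.sqrt (stK p r x y) * f y) ^ 2
        = stK p r x y * (f y) ^ 2 := by
      intro y
      rw [mul_pow, Real.sq_sqrt (hKnn y)]
    have e3 : ∀ y : Fin n → Bool, (Real.sqrt (stK p r x y) * W y) ^ 2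
        = stK p r x y * (W y) ^ 2 := by
      intro y
      rw [mul_pow, Real.sq_sqrt (hKnn y)]
    simp_rw [e1, e2, e3] at this
    exact this
  have hKf2 : (∑ y, stK p r x y * (f y) ^ 2) = 1 := by
    have : ∀ y : Fin n → Bool, stK p r x y * (f y) ^ 2 = stK p r x y := by
      intro y
      rcases hf y with h | h <;> rw [h] <;> norm_num
    simp_rw [this]
    exact st_K_rowsum x
  -- second moment of W
  have hker_prod : ∀ j : Fin n, c ≤ stKer p r (x j) true * stKer p r (x j) false := by
    intro j
    have hprod : stKer p r (x j) true * stKer p r (x j) false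
        = ((1 - r) * stQ p (!(x j))) * (1 - (1 - r) * stQ p (!(x j))) := by
      cases hxj : x j <;>
        simp only [stKer, stQ, Bool.not_false, Bool.not_true, if_true, if_false,
          Bool.true_eq_false, Bool.false_eq_true] <;> ring
    rw [hprod, hc]
    have hq1 : a ≤ stQ p (!(x j)) := min_le_stQ _
    have hq2 : stQ p (!(x j)) ≤ max p (1 - p) := stQ_le_max _
    have hmm : a + max p (1 - p) = 1 := by
      rw [ha, min_add_max]; ring
    have h1r : 0 < 1 - r := by linarith
    have hz1 : (1 - r) * a ≤ (1 - r) * stQ p (!(x j)) := by nlinarith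
    have hz2 : (1 - r) * stQ p (!(x j)) + (1 - r) * a ≤ 1 := by nlinarith
    nlinarith [mul_nonneg (sub_nonneg.2 hz1)
      (by linarith : (0:ℝ) ≤ 1 - (1 - r) * stQ p (!(x j)) - (1 - r) * a)]
  have hkerT : ∀ j : Fin n, 0 < stKer p r (x j) true := fun j => stKer_pos hp h0 h1 _ _
  have hkerF : ∀ j : Fin n, 0 < stKer p r (x j) false := fun j => stKer_pos hp h0 h1 _ _
  have hE : ∀ j k : Fin n, (∑ y, stK p r x y * (τ j (y j) * τ k (y k)))
      = if j = k then 1 / (stKer p r (x j) true * stKer p r (x j) false) else 0 := by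
    intro j k
    by_cases hjk : j = k
    · subst hjk
      rw [if_pos rfl]
      rw [st_E1 p r x j (fun b => τ j b * τ j b)]
      rw [hτ]
      unfold stTau
      have hrow := stKer_rowsum p r (x j)
      have hT' := (hkerT j).ne'
      have hF' := (hkerF j).ne'
      simp only [if_true, if_false, Bool.false_eq_true]
      field_simp
      linarith [hrow]
    · rw [if_neg hjk]
      rw [st_E2 p r x hjk (fun b => τ j b) (fun b => τ k b)]
      have hz : stKer p r (x j) true * τ j true + stKer p r (x j) false * τ j false = 0 := by
        rw [hτ]; unfold stTau; simp only [if_true, if_false, Bool.false_eq_true]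
        have hT' := (hkerT j).ne'
        have hF' := (hkerF j).ne'
        field_simp
        norm_num
      rw [hz, zero_mul]
  have hWW : ∑ y, stK p r x y * (W y) ^ 2 ≤ S / c := by
    have e1 : ∀ y : Fin n → Bool, stK p r x y * (W y) ^ 2
        = ∑ j, ∑ k, (U j * U k) * (stK p r x y * (τ j (y j) * τ k (y k))) := by
      intro y
      rw [hW]
      simp only
      rw [sq, Finset.sum_mul_sum]
      rw [Finset.mul_sum]
      refine Finset.sum_congr rfl fun j _ => ?_
      rw [Finset.mul_sum]
      refine Finset.sum_congr rfl fun k _ => ?_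
      ring
    simp_rw [e1]
    rw [Finset.sum_comm]
    have e2 : ∀ j : Fin n,
        ∑ y : Fin n → Bool, ∑ k, (U j * U k) * (stK p r x y * (τ j (y j) * τ k (y k)))
        = (U j) ^ 2 * (1 / (stKer p r (x j) true * stKer p r (x j) false)) := by
      intro j
      rw [Finset.sum_comm]
      have e3 : ∀ k : Fin n,
          ∑ y : Fin n → Bool, (U j * U k) * (stK p r x y * (τ j (y j) * τ k (y k)))
          = (U j * U k) * (if j = k then
              1 / (stKer p r (x j) true * stKer p r (x j) false) else 0) := by
        intro k
        rw [← Finset.mul_sum, hE j k]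
      rw [Finset.sum_congr rfl fun k _ => e3 k]
      rw [Finset.sum_eq_single j]
      · rw [if_pos rfl]; ring
      · intro k _ hkj
        rw [if_neg (Ne.symm hkj), mul_zero]
      · intro h; exact absurd (Finset.mem_univ j) h
    rw [Finset.sum_congr rfl fun j _ => e2 j]
    have : ∀ j : Fin n, (U j) ^ 2 * (1 / (stKer p r (x j) true * stKer p r (x j) false))
        ≤ (U j) ^ 2 * (1 / c) := by
      intro j
      apply mul_le_mul_of_nonneg_left _ (sq_nonneg _)
      apply one_div_le_one_div_of_le hcpos (hker_prod j)
    calc ∑ j, (U j) ^ 2 * (1 / (stKer p r (x j) true * stKer p r (x j) false))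
        ≤ ∑ j, (U j) ^ 2 * (1 / c) := Finset.sum_le_sum fun j _ => this j
      _ = S / c := by rw [← Finset.sum_mul, ← hS]; ring
  -- combine
  have hfinal : 4 * S ^ 2 ≤ S / c := by
    have h2S : (2 * S) ^ 2 ≤ 1 * (S / c) := by
      rw [hmain]
      calc (∑ y, stK p r x y * (f y * W y)) ^ 2
          ≤ (∑ y, stK p r x y * (f y) ^ 2) * (∑ y, stK p r x y * (W y) ^ 2) := hcs
        _ ≤ 1 * (S / c) := by
            rw [hKf2]
            apply mul_le_mul_of_nonneg_left hWW (by norm_num)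
    nlinarith [h2S]
  rcases eq_or_lt_of_le hSnn with hS0 | hSpos
  · rw [← hS0]
    positivity
  · have h4S : 4 * S ≤ 1 / c := by
      rw [div_eq_mul_one_div S c] at hfinal
      nlinarith [hfinal, hSpos]
    have hc4 : (0:ℝ) < 4 * c := by linarith
    rw [le_div_iff₀ hc4]
    calc S * (4 * c) = (4 * S) * c := by ring
      _ ≤ (1 / c) * c := mul_le_mul_of_nonneg_right h4S hcpos.le
      _ = 1 := by field_simp

end Key
section Mono
variable {n : ℕ} {p r : ℝ} {f : (Fin n → Bool) → ℝ}

lemma st_pq_eq (p : ℝ) : p * (1 - p) = max p (1 - p) * min p (1 - p) := by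
  rcases le_total p (1 - p) with h | h
  · rw [max_eq_right h, min_eq_left h]; ring
  · rw [max_eq_left h, min_eq_right h]

lemma st_grad_eq (f : (Fin n → Bool) → ℝ) (x : Fin n → Bool) :
    gradNorm f x = Real.sqrt (∑ j, (stG f j x) ^ 2) := by
  unfold gradNorm
  congr 1
  exact (Finset.sum_congr rfl fun j _ => st_gj_sq f j x).symm

lemma st_deriv_bound (hp : p ∈ Set.Ioo (0:ℝ) 1) (hf : ∀ x, f x = 1 ∨ f x = -1)
    (h0 : 0 ≤ r) (h1 : r < 1) :
    ∑ j, stA p r n f j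
      ≤ 2 * (p * (1 - p)) * ex p n (gradNorm f)
        * (1 / Real.sqrt ((1 - r) * min p (1 - p) * (1 - (1 - r) * min p (1 - p)))) := by
  set c := (1 - r) * min p (1 - p) * (1 - (1 - r) * min p (1 - p)) with hc
  have hap : 0 < min p (1 - p) := lt_min hp.1 (by linarith [hp.2])
  have ha2 : min p (1 - p) ≤ 1 / 2 := by
    rcases le_total p (1 - p) with h | h
    · rw [min_eq_left h]; linarith
    · rw [min_eq_right h]; linarith
  have hcpos : 0 < c := by
    rw [hc]
    have h1r : 0 < 1 - r := by linarith
    have : (1 - r) * min p (1 - p) ≤ 1 / 2 := by nlinarith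
    exact mul_pos (mul_pos h1r hap) (by linarith)
  have hscpos : 0 < Real.sqrt c := Real.sqrt_pos.2 hcpos
  -- pointwise Cauchy-Schwarz step
  have hstep : ∀ x : Fin n → Bool, ∑ j, stG f j x * stU p r f j x
      ≤ gradNorm f x * (1 / (2 * Real.sqrt c)) := by
    intro x
    have hcs := Finset.sum_mul_sq_le_sq_mul_sq univ
      (fun j => stG f j x) (fun j => stU p r f j x)
    have hUb := st_key hp hf h0 h1 x
    have t1 : (∑ j, stG f j x * stU p r f j x)
        ≤ Real.sqrt ((∑ j, (stG f j x) ^ 2) * (∑ j, (stU p r f j x) ^ 2)) := by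
      calc (∑ j, stG f j x * stU p r f j x)
          ≤ |∑ j, stG f j x * stU p r f j x| := le_abs_self _
        _ = Real.sqrt ((∑ j, stG f j x * stU p r f j x) ^ 2) :=
            (Real.sqrt_sq_eq_abs _).symm
        _ ≤ Real.sqrt ((∑ j, (stG f j x) ^ 2) * (∑ j, (stU p r f j x) ^ 2)) :=
            Real.sqrt_le_sqrt hcs
    have t2 : Real.sqrt ((∑ j, (stG f j x) ^ 2) * (∑ j, (stU p r f j x) ^ 2))
        ≤ Real.sqrt (∑ j, (stG f j x) ^ 2) * Real.sqrt (1 / (4 * c)) := by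
      rw [Real.sqrt_mul (Finset.sum_nonneg fun j _ => sq_nonneg _)]
      apply mul_le_mul_of_nonneg_left _ (Real.sqrt_nonneg _)
      exact Real.sqrt_le_sqrt hUb
    have t3 : Real.sqrt (1 / (4 * c)) = 1 / (2 * Real.sqrt c) := by
      rw [show (4 : ℝ) * c = (2 * Real.sqrt c) ^ 2 by
        rw [mul_pow, Real.sq_sqrt hcpos.le]; norm_num]
      rw [one_div, one_div, Real.sqrt_inv, Real.sqrt_sq (by positivity)]
    calc (∑ j, stG f j x * stU p r f j x)
        ≤ Real.sqrt ((∑ j, (stG f j x) ^ 2) * (∑ j, (stU p r f j x) ^ 2)) := t1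
      _ ≤ Real.sqrt (∑ j, (stG f j x) ^ 2) * Real.sqrt (1 / (4 * c)) := t2
      _ = gradNorm f x * (1 / (2 * Real.sqrt c)) := by rw [st_grad_eq, t3]
  -- sum over x
  have hsum : ∑ j, stA p r n f j
      = 4 * (p * (1 - p)) * ∑ x, wt p n x * ∑ j, stG f j x * stU p r f j x := by
    rw [Finset.sum_congr rfl fun j _ => (st_A_eq_B p r n f j).trans (st_B_eq_U p r n f j)]
    rw [← Finset.mul_sum, Finset.sum_comm]
    congr 1
    refine Finset.sum_congr rfl fun x _ => ?_
    rw [Finset.mul_sum]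
  rw [hsum]
  have hb : ∑ x, wt p n x * ∑ j, stG f j x * stU p r f j x
      ≤ ∑ x, wt p n x * (gradNorm f x * (1 / (2 * Real.sqrt c))) := by
    refine Finset.sum_le_sum fun x _ => ?_
    exact mul_le_mul_of_nonneg_left (hstep x) (st_wt_nonneg hp x)
  have hpq : (0:ℝ) < p * (1 - p) := mul_pos hp.1 (by linarith [hp.2])
  calc 4 * (p * (1 - p)) * ∑ x, wt p n x * ∑ j, stG f j x * stU p r f j x
      ≤ 4 * (p * (1 - p)) * ∑ x, wt p n x * (gradNorm f x * (1 / (2 * Real.sqrt c))) := by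
        apply mul_le_mul_of_nonneg_left hb (by positivity)
    _ = 2 * (p * (1 - p)) * ex p n (gradNorm f) * (1 / Real.sqrt c) := by
        unfold ex
        rw [Finset.mul_sum]
        rw [show 2 * (p * (1 - p)) * (∑ x : Fin n → Bool, wt p n x * gradNorm f x)
              * (1 / Real.sqrt c)
            = ∑ x : Fin n → Bool,
                2 * (p * (1 - p)) * (wt p n x * gradNorm f x) * (1 / Real.sqrt c) from by
          rw [Finset.mul_sum, Finset.sum_mul]]
        refine Finset.sum_congr rfl fun x _ => ?_
        field_simp
        ring

lemma st_cubic {s : ℝ} (h0 : 0 ≤ s) (h1 : s ≤ 1) :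
    s ^ 2 ≤ (19 / 25) * s ^ 3 + 7 / 25 := by
  nlinarith [sq_nonneg (s - 877/1000), mul_nonneg (sq_nonneg (s - 877/1000)) h0,
    sq_nonneg s, sq_nonneg (1 - s)]

end Mono
section Main
variable {n : ℕ} {p : ℝ} {f : (Fin n → Bool) → ℝ}

set_option maxHeartbeats 2000000 in
lemma st_main_bound (hp : p ∈ Set.Ioo (0:ℝ) 1) (hf : ∀ x, f x = 1 ∨ f x = -1)
    {d0 : ℝ} (hd0 : 0 < d0) (hd1 : d0 < 1) :
    1 - stPsi p n f (1 - d0)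
      ≤ 2 * max p (1 - p) * Real.sqrt (Real.pi * d0) * ex p n (gradNorm f) := by
  set a := min p (1 - p) with ha
  set E := ex p n (gradNorm f) with hE
  have hap : 0 < a := lt_min hp.1 (by linarith [hp.2])
  have ha2 : a ≤ 1 / 2 := by
    rcases le_total p (1 - p) with h | h
    · rw [ha, min_eq_left h]; linarith
    · rw [ha, min_eq_right h]; linarith
  have hEnn : 0 ≤ E := by
    rw [hE]; unfold ex
    exact Finset.sum_nonneg fun x _ =>
      mul_nonneg (st_wt_nonneg hp x) (Real.sqrt_nonneg _)
  have hpq : (0:ℝ) < p * (1 - p) := mul_pos hp.1 (by linarith [hp.2])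
  have hsa : 0 < Real.sqrt a := Real.sqrt_pos.2 hap
  set KON : ℝ := 2 * (p * (1 - p)) * E * (2 / Real.sqrt a) with hKON
  have hKONnn : 0 ≤ KON := by positivity
  set G : ℝ → ℝ := fun d => KON * ((19/25) * Real.sqrt d
    + (7/25) * (Real.sqrt d * (Real.sqrt (1 - a * d))⁻¹)) with hG
  set D : ℝ → ℝ := fun d => G d - (1 - stPsi p n f (1 - d)) with hDdef
  -- derivative facts on the open interval
  have hsqpos : ∀ d : ℝ, d ∈ Set.Icc (0:ℝ) d0 → 0 < 1 - a * d := by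
    intro d hd
    have h1 : a * d ≤ a * d0 := mul_le_mul_of_nonneg_left hd.2 hap.le
    nlinarith [hd.1, hap]
  have hDeriv : ∀ d ∈ Set.Ioo (0:ℝ) d0, HasDerivAt D
      (KON * ((19/25) * (1 / (2 * Real.sqrt d))
        + (7/25) * ((1 / (2 * Real.sqrt d)) * (Real.sqrt (1 - a * d))⁻¹
            + Real.sqrt d * (-(1 / (2 * Real.sqrt (1 - a * d)) * -a)
                / (Real.sqrt (1 - a * d)) ^ 2)))
       - ∑ j, stA p (1 - d) n f j) d := by
    intro d hd
    have h1ad : 0 < 1 - a * d := hsqpos d ⟨hd.1.le, hd.2.le⟩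
    have hsd : Real.sqrt (1 - a * d) ≠ 0 := (Real.sqrt_pos.2 h1ad).ne'
    have h1 : HasDerivAt (fun d : ℝ => Real.sqrt d) (1 / (2 * Real.sqrt d)) d :=
      Real.hasDerivAt_sqrt (ne_of_gt hd.1)
    have h2 : HasDerivAt (fun d : ℝ => 1 - a * d) (-a) d := by
      simpa using ((hasDerivAt_id d).const_mul a).const_sub 1
    have h3 : HasDerivAt (fun d : ℝ => Real.sqrt (1 - a * d))
        (1 / (2 * Real.sqrt (1 - a * d)) * -a) d :=
      (Real.hasDerivAt_sqrt (ne_of_gt h1ad)).comp d h2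
    have h4 := h3.inv hsd
    have h5 := h1.mul h4
    have hGd : HasDerivAt G
        (KON * ((19/25) * (1 / (2 * Real.sqrt d))
          + (7/25) * ((1 / (2 * Real.sqrt d)) * (Real.sqrt (1 - a * d))⁻¹
              + Real.sqrt d * (-(1 / (2 * Real.sqrt (1 - a * d)) * -a)
                  / (Real.sqrt (1 - a * d)) ^ 2)))) d :=
      ((h1.const_mul ((19:ℝ)/25)).add (h5.const_mul ((7:ℝ)/25))).const_mul KON
    have hP := st_hasDerivAt_Psi p n f (1 - d)
    have hl : HasDerivAt (fun d : ℝ => 1 - d) (-1) d := by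
      simpa using (hasDerivAt_id d).const_sub 1
    have hcomp := hP.comp d hl
    have hphi : HasDerivAt (fun d : ℝ => 1 - stPsi p n f (1 - d))
        (∑ j, stA p (1 - d) n f j) d := by
      have := (hasDerivAt_const d (1:ℝ)).sub hcomp
      have e : (0:ℝ) - (∑ j, stA p (1 - d) n f j) * (-1) = ∑ j, stA p (1 - d) n f j := by
        ring
      rw [e] at this
      exact this
    exact hGd.sub hphi
  -- the derivative is nonnegative
  have hDnn : ∀ d ∈ Set.Ioo (0:ℝ) d0,
      ∑ j, stA p (1 - d) n f j
      ≤ KON * ((19/25) * (1 / (2 * Real.sqrt d))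
        + (7/25) * ((1 / (2 * Real.sqrt d)) * (Real.sqrt (1 - a * d))⁻¹
            + Real.sqrt d * (-(1 / (2 * Real.sqrt (1 - a * d)) * -a)
                / (Real.sqrt (1 - a * d)) ^ 2))) := by
    intro d hd
    have h1ad : 0 < 1 - a * d := hsqpos d ⟨hd.1.le, hd.2.le⟩
    have hb := st_deriv_bound (r := 1 - d) hp hf (by linarith [hd.2, hd1]) (by linarith [hd.1])
    have e1 : 1 - (1 - d) = d := by ring
    rw [e1] at hb
    refine le_trans hb ?_
    -- algebraic comparison
    set u := Real.sqrt d with hu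
    set s := Real.sqrt (1 - a * d) with hs
    have hupos : 0 < u := Real.sqrt_pos.2 hd.1
    have hspos : 0 < s := Real.sqrt_pos.2 h1ad
    have hu2 : u ^ 2 = d := Real.sq_sqrt hd.1.le
    have hs2 : s ^ 2 = 1 - a * d := Real.sq_sqrt h1ad.le
    have hs1 : s ≤ 1 := by
      rw [hs]
      calc Real.sqrt (1 - a * d) ≤ Real.sqrt 1 :=
            Real.sqrt_le_sqrt (by nlinarith [hap, hd.1])
        _ = 1 := Real.sqrt_one
    have hsplit : Real.sqrt (d * a * (1 - d * a)) = u * (Real.sqrt a * s) := by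
      rw [show d * a * (1 - d * a) = d * (a * (1 - a * d)) from by ring]
      rw [Real.sqrt_mul hd.1.le, Real.sqrt_mul hap.le, hu, hs]
    have hKONe : KON = 2 * (p * (1 - p)) * E * (2 / Real.sqrt a) := hKON
    -- reduce to the cubic inequality
    have hcub := st_cubic hspos.le hs1
    have hmain : 1 / (u * (Real.sqrt a * s))
        ≤ (2 / Real.sqrt a) * ((19/25) * (1 / (2 * u))
          + (7/25) * ((1 / (2 * u)) * s⁻¹ + u * (-(1 / (2 * s) * -a) / s ^ 2))) := by
      rw [div_le_iff₀ (by positivity)]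
      have expand : (2 / Real.sqrt a) * ((19/25) * (1 / (2 * u))
          + (7/25) * ((1 / (2 * u)) * s⁻¹ + u * (-(1 / (2 * s) * -a) / s ^ 2)))
          * (u * (Real.sqrt a * s))
          = ((19/25) * s ^ 3 + (7/25) * s ^ 2 + (7/25) * (a * u ^ 2)) / s ^ 2 := by
        field_simp
        ring
      rw [expand]
      rw [le_div_iff₀ (by positivity)]
      have : a * u ^ 2 = 1 - s ^ 2 := by rw [hu2]; rw [hs2]; ring
      rw [this]
      nlinarith [hcub]
    calc 2 * (p * (1 - p)) * E * (1 / Real.sqrt (d * a * (1 - d * a)))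
        = 2 * (p * (1 - p)) * E * (1 / (u * (Real.sqrt a * s))) := by rw [hsplit]
      _ ≤ 2 * (p * (1 - p)) * E * ((2 / Real.sqrt a) * ((19/25) * (1 / (2 * u))
          + (7/25) * ((1 / (2 * u)) * s⁻¹ + u * (-(1 / (2 * s) * -a) / s ^ 2)))) := by
          apply mul_le_mul_of_nonneg_left hmain (by positivity)
      _ = KON * ((19/25) * (1 / (2 * u))
          + (7/25) * ((1 / (2 * u)) * s⁻¹ + u * (-(1 / (2 * s) * -a) / s ^ 2))) := by
          rw [hKONe]; ring
  -- continuity of D on [0, d0]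
  have hPsiCont : Continuous (stPsi p n f) := by
    rw [continuous_iff_continuousAt]
    exact fun r => (st_hasDerivAt_Psi p n f r).differentiableAt.continuousAt
  have hContD : ContinuousOn D (Set.Icc 0 d0) := by
    apply ContinuousOn.sub
    · apply ContinuousOn.mul continuousOn_const
      apply ContinuousOn.add
      · exact (continuous_const.mul Real.continuous_sqrt).continuousOn
      · apply ContinuousOn.mul continuousOn_const
        apply ContinuousOn.mul Real.continuous_sqrt.continuousOn
        apply ContinuousOn.inv₀
        · exact (Real.continuous_sqrt.comp (continuous_const.sub
            (continuous_const.mul continuous_id))).continuousOn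
        · intro d hd
          exact (Real.sqrt_pos.2 (hsqpos d hd)).ne'
    · exact (continuous_const.sub (hPsiCont.comp
        (continuous_const.sub continuous_id))).continuousOn
  -- monotonicity
  have hmono : MonotoneOn D (Set.Icc 0 d0) := by
    apply monotoneOn_of_deriv_nonneg (convex_Icc 0 d0) hContD
    · rw [interior_Icc]
      exact fun d hd => ((hDeriv d hd).differentiableAt).differentiableWithinAt
    · rw [interior_Icc]
      intro d hd
      rw [(hDeriv d hd).deriv]
      have := hDnn d hd
      linarith
  have hD0 : D 0 = 0 := by
    simp only [hDdef, hG]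
    rw [Real.sqrt_zero, sub_zero, stPsi_one hf]
    ring
  have hDd0 : 0 ≤ D d0 := by
    rw [← hD0]
    exact hmono (Set.mem_Icc.2 ⟨le_refl 0, hd0.le⟩) (Set.mem_Icc.2 ⟨hd0.le, le_refl d0⟩) hd0.le
  have hphiG : 1 - stPsi p n f (1 - d0) ≤ G d0 := by
    have : D d0 = G d0 - (1 - stPsi p n f (1 - d0)) := rfl
    linarith [hDd0, this.symm.le]
  refine le_trans hphiG ?_
  -- final numeric bound : G d0 ≤ 2 M sqrt(pi d0) E
  have h1ad0 : 0 < 1 - a * d0 := hsqpos d0 ⟨hd0.le, le_refl d0⟩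
  set s0 := Real.sqrt (1 - a * d0) with hs0
  have hs0pos : 0 < s0 := Real.sqrt_pos.2 h1ad0
  have hMnn : 0 ≤ max p (1 - p) := le_trans hp.1.le (le_max_left _ _)
  have hinv : s0⁻¹ ≤ Real.sqrt 2 := by
    rw [hs0, ← Real.sqrt_inv]
    apply Real.sqrt_le_sqrt
    rw [inv_le_comm₀ (by positivity) (by norm_num)]
    nlinarith [hd1, hap, ha2, hd0]
  have c1 : Real.sqrt 2 ≤ 1.4143 := by
    rw [show (1.4143:ℝ) = Real.sqrt (1.4143 ^ 2) from (Real.sqrt_sq (by norm_num)).symm]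
    exact Real.sqrt_le_sqrt (by norm_num)
  have c2 : Real.sqrt a ≤ 0.7072 := by
    rw [show (0.7072:ℝ) = Real.sqrt (0.7072 ^ 2) from (Real.sqrt_sq (by norm_num)).symm]
    exact Real.sqrt_le_sqrt (by nlinarith)
  have c3 : (1.7724:ℝ) ≤ Real.sqrt Real.pi := by
    rw [show (1.7724:ℝ) = Real.sqrt (1.7724 ^ 2) from (Real.sqrt_sq (by norm_num)).symm]
    exact Real.sqrt_le_sqrt (by nlinarith [Real.pi_gt_d6])
  have hsd0 : 0 ≤ Real.sqrt d0 := Real.sqrt_nonneg d0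
  have hKONe2 : KON = 4 * max p (1 - p) * Real.sqrt a * E := by
    rw [hKON, st_pq_eq p, ← ha]
    field_simp
    linear_combination (-(4 * (max p (1 - p)) * E)) * (Real.mul_self_sqrt hap.le)
  have step1 : (19/25) * Real.sqrt d0 + (7/25) * (Real.sqrt d0 * s0⁻¹)
      ≤ (19/25 + (7/25) * Real.sqrt 2) * Real.sqrt d0 := by
    have : Real.sqrt d0 * s0⁻¹ ≤ Real.sqrt d0 * Real.sqrt 2 :=
      mul_le_mul_of_nonneg_left hinv hsd0
    nlinarith [this]
  have step2 : G d0 ≤ KON * ((19/25 + (7/25) * Real.sqrt 2) * Real.sqrt d0) := by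
    rw [hG]
    exact mul_le_mul_of_nonneg_left step1 hKONnn
  refine le_trans step2 ?_
  rw [hKONe2]
  rw [Real.sqrt_mul Real.pi_pos.le]
  have hfact : 4 * Real.sqrt a * (19/25 + (7/25) * Real.sqrt 2) ≤ 2 * Real.sqrt Real.pi := by
    nlinarith [c1, c2, c3, Real.sqrt_nonneg a, Real.sqrt_nonneg 2]
  calc 4 * max p (1 - p) * Real.sqrt a * E * ((19/25 + (7/25) * Real.sqrt 2) * Real.sqrt d0)
      = (4 * Real.sqrt a * (19/25 + (7/25) * Real.sqrt 2))
          * (max p (1 - p) * E * Real.sqrt d0) := by ring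
    _ ≤ (2 * Real.sqrt Real.pi) * (max p (1 - p) * E * Real.sqrt d0) := by
        apply mul_le_mul_of_nonneg_right hfact
        positivity
    _ = 2 * max p (1 - p) * (Real.sqrt Real.pi * Real.sqrt d0) * E := by ring

end Main

theorem stmt10 (p : ℝ) (hp : p ∈ Set.Ioo (0:ℝ) 1) (n : ℕ) (t : ℝ) (ht : 0 ≤ t)
    (f : (Fin n → Bool) → ℝ) (hf : ∀ x, f x = 1 ∨ f x = -1) :
    var p n f - var p n (heatPt p t n f) = 1 - ex p n (fun x => |heatPt p t n f x| ^ 2)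
    ∧ 1 - ex p n (fun x => |heatPt p t n f x| ^ 2)
        ≤ 2 * max p (1 - p) * Real.sqrt (Real.pi * (1 - Real.exp (-2 * t)))
          * ex p n (gradNorm f) := by
  have habs : ex p n (fun x => |heatPt p t n f x| ^ 2)
      = ex p n (fun x => (heatPt p t n f x) ^ 2) := by
    unfold ex
    refine Finset.sum_congr rfl fun x _ => ?_
    simp only [sq_abs]
  have hEnn : 0 ≤ ex p n (gradNorm f) := by
    unfold ex
    exact Finset.sum_nonneg fun x _ =>
      mul_nonneg (st_wt_nonneg hp x) (Real.sqrt_nonneg _)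
  constructor
  · unfold var
    rw [habs, st_ex_sq hf, st_ex_heat]
    ring
  · rw [habs]
    rcases eq_or_lt_of_le ht with h0 | hpos
    · rw [← h0]
      rw [st_heat_zero]
      rw [st_ex_sq hf]
      simp only [sub_self]
      have hM : (0:ℝ) ≤ 2 * max p (1 - p) := by
        have := le_trans hp.1.le (le_max_left p (1 - p))
        linarith
      exact mul_nonneg (mul_nonneg hM (Real.sqrt_nonneg _)) hEnn
    · set d0 := 1 - Real.exp (-2 * t) with hd0def
      have he1 : Real.exp (-2 * t) < 1 := by
        rw [Real.exp_lt_one_iff]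
        linarith
      have hd0 : 0 < d0 := by rw [hd0def]; linarith
      have hd1 : d0 < 1 := by
        rw [hd0def]
        have := Real.exp_pos (-2 * t)
        linarith
      have hPsi : ex p n (fun x => (heatPt p t n f x) ^ 2) = stPsi p n f (1 - d0) := by
        rw [st_ex_heat_sq]
        congr 1
        rw [hd0def, sub_sub_cancel, ← Real.exp_add]
        congr 1
        ring
      rw [hPsi]
      exact st_main_bound hp hf hd0 hd1
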